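/- Let x, y ∈ ℝ^N with x ≠ y, let L ≥ ‖x-y‖, and let γ : [0,1] → ℝ^N satisfy γ(0) = x, γ(1) = y, ‖γ(t) - x‖ ≤ Lt and ‖γ(t) - y‖ ≤ L(1-t) for all t ∈ [0,1]. Let γ̄(t) = (1-t)x + ty. Then ∫₀¹ ‖γ(t) - γ̄(t)‖ dt ≤ (1/√6)·√(L² - ‖x-y‖²). -/

import Mathlib

open MeasureTheory intervalIntegral Set

theorem path_deviation_L1 {N : ℕ} (x y : EuclideanSpace ℝ (Fin N)) (hxy : x ≠ y) (L : ℝ)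
    (hL : ‖x - y‖ ≤ L) (γ : ℝ → EuclideanSpace ℝ (Fin N)) (h0 : γ 0 = x) (h1 : γ 1 = y)
    (hx : ∀ t ∈ Set.Icc (0:ℝ) 1, ‖γ t - x‖ ≤ L * t)
    (hy : ∀ t ∈ Set.Icc (0:ℝ) 1, ‖γ t - y‖ ≤ L * (1 - t)) :
    ∫ t in (0:ℝ)..1, ‖γ t - ((1 - t) • x + t • y)‖
      ≤ (1 / Real.sqrt 6) * Real.sqrt (L ^ 2 - ‖x - y‖ ^ 2) := by
  set C := L ^ 2 - ‖x - y‖ ^ 2 with hCdef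
  have hd : 0 ≤ ‖x - y‖ := norm_nonneg _
  have hC : 0 ≤ C := by nlinarith
  set f : ℝ → ℝ := fun t => ‖γ t - ((1 - t) • x + t • y)‖ with hf
  have hrhs : 0 ≤ (1 / Real.sqrt 6) * Real.sqrt C := by positivity
  -- pointwise bound
  have key : ∀ t ∈ Set.Icc (0:ℝ) 1, f t ^ 2 ≤ t * (1 - t) * C := by
    intro t ht
    obtain ⟨ht0, ht1⟩ := ht
    have ha := hx t ⟨ht0, ht1⟩
    have hb := hy t ⟨ht0, ht1⟩
    have ha0 : (0:ℝ) ≤ ‖γ t - x‖ := norm_nonneg _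
    have hb0 : (0:ℝ) ≤ ‖γ t - y‖ := norm_nonneg _
    have hcomb : γ t - ((1 - t) • x + t • y) = (1 - t) • (γ t - x) + t • (γ t - y) := by
      module
    have hexp : f t ^ 2 = (1 - t) ^ 2 * ‖γ t - x‖ ^ 2 + 2 * ((1 - t) * t) *
        (inner ℝ (γ t - x) (γ t - y) : ℝ) + t ^ 2 * ‖γ t - y‖ ^ 2 := by
      rw [hf]
      simp only [hcomb, norm_add_sq_real, norm_smul, real_inner_smul_left,
        real_inner_smul_right, Real.norm_eq_abs, mul_pow, sq_abs]
      ring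
    have hsub : ‖x - y‖ ^ 2 = ‖γ t - x‖ ^ 2 - 2 * (inner ℝ (γ t - x) (γ t - y) : ℝ)
        + ‖γ t - y‖ ^ 2 := by
      have : x - y = (γ t - y) - (γ t - x) := by abel
      rw [this, norm_sub_sq_real, real_inner_comm]
      ring
    have a2 : ‖γ t - x‖ ^ 2 ≤ (L * t) ^ 2 := pow_le_pow_left₀ ha0 ha 2
    have b2 : ‖γ t - y‖ ^ 2 ≤ (L * (1 - t)) ^ 2 := pow_le_pow_left₀ hb0 hb 2
    nlinarith [hexp, hsub, mul_le_mul_of_nonneg_left a2 (by linarith : (0:ℝ) ≤ 1 - t),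
      mul_le_mul_of_nonneg_left b2 ht0]
  by_cases hInt : IntervalIntegrable f volume 0 1
  · have hfi : IntegrableOn f (Ioc 0 1) volume := hInt.1
    set h : ℝ → ℝ := fun t => f t ^ 2 with hh
    have hmeas : AEStronglyMeasurable h (volume.restrict (Ioc (0:ℝ) 1)) := by
      have := hfi.aestronglyMeasurable
      exact this.pow 2
    have hhi : IntegrableOn h (Ioc 0 1) volume := by
      refine Integrable.mono' (integrableOn_const (C := C) (by simp)) hmeas ?_
      rw [ae_restrict_iff' measurableSet_Ioc]
      refine ae_of_all _ fun t ht => ?_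
      have ht' : t ∈ Set.Icc (0:ℝ) 1 := ⟨ht.1.le, ht.2⟩
      have := key t ht'
      have h1' : t * (1 - t) * C ≤ C := by nlinarith [mul_nonneg hC (sq_nonneg (t - 1/2))]
      rw [Real.norm_eq_abs, abs_of_nonneg (sq_nonneg _)]
      show f t ^ 2 ≤ C
      linarith
    have hvol : volume (Ioc (0:ℝ) 1) = 1 := by simp
    -- Jensen
    have hjen : (⨍ t in Ioc (0:ℝ) 1, Real.sqrt (h t)) ≤ Real.sqrt (⨍ t in Ioc (0:ℝ) 1, h t) := by
      refine Real.strictConcaveOn_sqrt.concaveOn.le_map_set_average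
        Real.continuous_sqrt.continuousOn isClosed_Ici (by simp [hvol]) (by simp [hvol]) ?_ hhi ?_
      · exact ae_of_all _ fun t => Set.mem_Ici.2 (sq_nonneg _)
      · have : (Real.sqrt ∘ h) = f := by
          funext t; simp [hh, Function.comp, Real.sqrt_sq (norm_nonneg _)]; exact Real.sqrt_sq (norm_nonneg _)
        rw [this]; exact hfi
    have hsq : (fun t => Real.sqrt (h t)) = f := by
      funext t; simp [hh, Real.sqrt_sq (norm_nonneg _)]; exact Real.sqrt_sq (norm_nonneg _)
    rw [hsq] at hjen
    have havg : ∀ g : ℝ → ℝ, (⨍ t in Ioc (0:ℝ) 1, g t) = ∫ t in Ioc (0:ℝ) 1, g t := by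
      intro g; rw [setAverage_eq, measureReal_def, hvol]; simp
    rw [havg, havg] at hjen
    -- bound the integral of h
    have hpoly : IntervalIntegrable (fun t : ℝ => t * (1 - t) * C) volume 0 1 :=
      (((continuous_id.mul (continuous_const.sub continuous_id)).mul continuous_const : Continuous fun t : ℝ => t * (1 - t) * C)).intervalIntegrable 0 1
    have hbound : (∫ t in Ioc (0:ℝ) 1, h t) ≤ ∫ t in Ioc (0:ℝ) 1, t * (1 - t) * C := by
      refine setIntegral_mono_on hhi hpoly.1 measurableSet_Ioc fun t ht => ?_
      exact key t ⟨ht.1.le, ht.2⟩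
    have hval : (∫ t in Ioc (0:ℝ) 1, t * (1 - t) * C) = C / 6 := by
      rw [← intervalIntegral.integral_of_le zero_le_one]
      have heq : ∀ t : ℝ, t * (1 - t) * C = C * t - C * t ^ 2 := fun t => by ring
      simp_rw [heq]
      rw [intervalIntegral.integral_sub (intervalIntegrable_id.const_mul C)
        ((intervalIntegral.intervalIntegrable_pow 2).const_mul C),
        intervalIntegral.integral_const_mul, intervalIntegral.integral_const_mul,
        integral_id, integral_pow]
      ring
    have : (∫ t in Ioc (0:ℝ) 1, f t) ≤ Real.sqrt (C / 6) :=
      hjen.trans (Real.sqrt_le_sqrt (hbound.trans hval.le))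
    rw [intervalIntegral.integral_of_le zero_le_one]
    refine this.trans (le_of_eq ?_)
    rw [Real.sqrt_div hC]
    rw [show Real.sqrt 6 = Real.sqrt 6 from rfl]
    field_simp
  · rw [intervalIntegral.integral_undef hInt]
    exact hrhs
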